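/- Let G₁ and A be finite groups with a right action of G₁ on A by automorphisms, let G₂ be a finite group with |G₂| ≥ |A|, and set G = G₁ × G₂, identifying G₁ with G₁ × {1} ≤ G. Let I = Ind_{G₁}^G(A) be the group of G₁-invariant functions f : G → A (with f(στ) = f(σ)^τ for τ ∈ G₁), on which G acts by f^σ(τ) = f(στ), and let π : I → A be the evaluation f ↦ f(1). Then there exists ζ ∈ I such that for every g₁ ∈ G₁, the normal closure N of the element τ = (ζ, (g₁,1)) in the twisted wreath product A ≀_{G₁} G = I ⋊ G satisfies π(N ∩ I) = A. -/

import Mathlib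

section TwistedWreath

variable (G₁ G₂ A : Type*) [Group G₁] [Group G₂] [Group A] (ρ : G₁ →* MulAut A)

/-- The group `Ind_{G₁}^G(A)` of `G₁`-invariant functions `f : G → A` for `G = G₁ × G₂`,
where `G₁` is identified with `G₁ × {1}`; the right action of `G₁` on `A` is
`a^τ = ρ τ⁻¹ a`, and the invariance condition reads `f(σ·(τ,1)) = f(σ)^τ`. -/
def Ind : Subgroup (G₁ × G₂ → A) where
  carrier := {f | ∀ (σ : G₁ × G₂) (τ : G₁), f (σ * (τ, 1)) = ρ τ⁻¹ (f σ)}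
  one_mem' := by intro σ τ; simp
  mul_mem' := by
    intro f g hf hg σ τ
    simp only [Pi.mul_apply, hf σ τ, hg σ τ, map_mul]
  inv_mem' := by
    intro f hf σ τ
    simp only [Pi.inv_apply, hf σ τ, map_inv]

/-- The action of `G = G₁ × G₂` on `Ind_{G₁}^G(A)`; the right action `f^σ(τ) = f(στ)`
of the paper corresponds to the left action `(σ • f)(τ) = f(σ⁻¹τ)` used here, so that
`f^σ = σ⁻¹ • f`. -/
def wreathAction : (G₁ × G₂) →* MulAut ↥(Ind G₁ G₂ A ρ) where
  toFun g :=
    { toFun := fun f => ⟨fun x => (f : G₁ × G₂ → A) (g⁻¹ * x), by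
        intro σ τ
        dsimp only
        rw [← mul_assoc]
        exact f.2 (g⁻¹ * σ) τ⟩
      invFun := fun f => ⟨fun x => (f : G₁ × G₂ → A) (g * x), by
        intro σ τ
        dsimp only
        rw [← mul_assoc]
        exact f.2 (g * σ) τ⟩
      left_inv := by intro f; ext x; simp
      right_inv := by intro f; ext x; simp
      map_mul' := by intro f g'; rfl }
  map_one' := by ext f x; simp
  map_mul' := by intro g g'; ext f x; simp [mul_assoc]

/-- The twisted wreath product `A ≀_{G₁} G = Ind_{G₁}^G(A) ⋊ G` for `G = G₁ × G₂`. -/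
abbrev TwistedWreath := ↥(Ind G₁ G₂ A ρ) ⋊[wreathAction G₁ G₂ A ρ] (G₁ × G₂)

/-- The evaluation map `π : Ind_{G₁}^G(A) → A`, `f ↦ f(1)`. -/
def evalHom : ↥(Ind G₁ G₂ A ρ) →* A :=
  (Pi.evalMonoidHom (fun _ : G₁ × G₂ => A) 1).comp (Ind G₁ G₂ A ρ).subtype

end TwistedWreath

/-- Let `G₁` and `A` be finite groups with a right action of `G₁` on `A`, let `G₂` be a
finite group with `|G₂| ≥ |A|`, and `G = G₁ × G₂`. Then there exists `ζ ∈ Ind_{G₁}^G(A)`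
such that for every `g₁ ∈ G₁` the normal closure `N` of `τ = (ζ, (g₁, 1))` in the
twisted wreath product `A ≀_{G₁} G` satisfies `π(N ∩ Ind_{G₁}^G(A)) = A`. -/
theorem exists_zeta_normal_closure_projects_onto
    (G₁ G₂ A : Type*) [Group G₁] [Group G₂] [Group A]
    [Fintype G₁] [Fintype G₂] [Fintype A] (ρ : G₁ →* MulAut A)
    (hcard : Fintype.card A ≤ Fintype.card G₂) :
    ∃ ζ : ↥(Ind G₁ G₂ A ρ), ∀ g₁ : G₁,
      Subgroup.map (evalHom G₁ G₂ A ρ)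
        (Subgroup.comap (SemidirectProduct.inl : ↥(Ind G₁ G₂ A ρ) →* TwistedWreath G₁ G₂ A ρ)
          (Subgroup.normalClosure {(⟨ζ, (g₁, 1)⟩ : TwistedWreath G₁ G₂ A ρ)})) = ⊤ := by
  obtain ⟨e⟩ : Nonempty (A ↪ G₂) := Function.Embedding.nonempty_of_card_le hcard
  classical
  set h : G₂ → A := Function.invFun e with hh
  have hinv : ∀ a : A, h (e a) = a := Function.leftInverse_invFun e.injective
  refine ⟨⟨fun σ => ρ σ.1⁻¹ (h σ.2), ?_⟩, ?_⟩
  · intro σ τ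
    simp [Prod.mul_def, mul_inv_rev, map_mul]
  · intro g₁
    set ζ : ↥(Ind G₁ G₂ A ρ) := ⟨fun σ => ρ σ.1⁻¹ (h σ.2), by
      intro σ τ; simp [Prod.mul_def, mul_inv_rev, map_mul]⟩ with hζ
    rw [Subgroup.eq_top_iff']
    intro a
    rw [Subgroup.mem_map]
    set s : G₂ := (e (a * h 1))⁻¹ with hs
    set x : ↥(Ind G₁ G₂ A ρ) := wreathAction G₁ G₂ A ρ ((1 : G₁), s) ζ * ζ⁻¹ with hx
    refine ⟨x, ?_, ?_⟩
    · rw [Subgroup.mem_comap]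
      set t : TwistedWreath G₁ G₂ A ρ := ⟨ζ, (g₁, 1)⟩ with htdef
      have ht : t ∈ Subgroup.normalClosure {t} :=
        Subgroup.subset_normalClosure rfl
      have hkey : (SemidirectProduct.inl x : TwistedWreath G₁ G₂ A ρ) =
          (SemidirectProduct.inr ((1 : G₁), s) * t * (SemidirectProduct.inr ((1 : G₁), s))⁻¹)
            * t⁻¹ := by
        have h1 : t = SemidirectProduct.inl ζ * SemidirectProduct.inr (g₁, 1) :=
          SemidirectProduct.mk_eq_inl_mul_inr _ _
        rw [h1]
        ext
        · rw [SemidirectProduct.left_inl]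
          simp only [SemidirectProduct.mul_left, SemidirectProduct.inv_left, SemidirectProduct.left_inl, SemidirectProduct.right_inl,
              SemidirectProduct.left_inr, SemidirectProduct.right_inr, SemidirectProduct.mul_right, SemidirectProduct.inv_right]
          simp only [hx, hζ, SemidirectProduct.mul_left, SemidirectProduct.mul_right,
            SemidirectProduct.inv_left, SemidirectProduct.inv_right,
            SemidirectProduct.left_inl, SemidirectProduct.right_inl,
            SemidirectProduct.left_inr, SemidirectProduct.right_inr,
            wreathAction, MonoidHom.coe_mk, OneHom.coe_mk, MulEquiv.coe_mk,
            Equiv.coe_fn_mk, Subgroup.coe_mul, Subgroup.coe_inv, Pi.mul_apply, Pi.inv_apply,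
            Subgroup.coe_mk, one_mul, mul_one, map_one]
          simp [Prod.mk_mul_mk, Prod.inv_mk, mul_assoc]
        · simp [Prod.mk_mul_mk, Prod.inv_mk, mul_assoc]
        · simp [Prod.mk_mul_mk, Prod.inv_mk, mul_assoc]
      rw [hkey]
      exact mul_mem
        (Subgroup.normalClosure_normal.conj_mem t ht _)
        (inv_mem ht)
    · have hinv' : ∀ b : A, Function.invFun (⇑e) (e b) = b :=
        Function.leftInverse_invFun e.injective
      simp only [hx, hζ, evalHom, wreathAction, MonoidHom.coe_comp, Function.comp_apply,
        Pi.evalMonoidHom_apply, Subgroup.coe_subtype, MonoidHom.coe_mk, OneHom.coe_mk,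
        MulEquiv.coe_mk, Equiv.coe_fn_mk, Subgroup.coe_mul, InvMemClass.coe_inv,
        Pi.mul_apply, Pi.inv_apply]
      simp [hs, hinv', mul_assoc]
      rw [hinv, mul_inv_cancel_right]
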